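/- Let λ_1 ≤ ... ≤ λ_n be positive reals, 1 ≤ k ≤ n-1, q > 1, and q' = q/(q-1). Then λ_n/λ_1 ≤ (σ_k^q / J)^{1/q} · (σ_{n-k}^{q'} / J)^{1/q'}, where σ_m is the m-th elementary symmetric polynomial of the λ_i and J = λ_1⋯λ_n. -/

import Mathlib

/-- The `m`-th elementary symmetric polynomial of the values `l 1, …, l n`. -/
def esymmFun (n m : ℕ) (l : Fin n → ℝ) : ℝ :=
  ∑ s ∈ Finset.powersetCard m (Finset.univ : Finset (Fin n)), ∏ i ∈ s, l i

private theorem rpow_div_aux (A J q : ℝ) (hA : 0 < A) (hJ : 0 < J) (hq0 : 0 < q) :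
    (A ^ q / J) ^ (1/q) = A / J ^ (1/q) := by
  rw [Real.div_rpow (Real.rpow_nonneg hA.le q) hJ.le, ← Real.rpow_mul hA.le,
    mul_one_div, div_self hq0.ne', Real.rpow_one]

theorem esymm_ratio_core (n k : ℕ) (hk : 1 ≤ k) (hkn : k + 1 ≤ n)
    (l : Fin n → ℝ) (hpos : ∀ i, 0 < l i) :
    let A : ℝ := esymmFun n k l
    let B : ℝ := esymmFun n (n - k) l
    l ⟨n - 1, Nat.sub_one_lt (by omega : n ≠ 0)⟩ / l ⟨0, Nat.lt_of_lt_of_le Nat.zero_lt_one (by omega : 1 ≤ n)⟩ ≤ A * B / ∏ i, l i := by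
  intro A B
  have hn : 0 < n := by omega
  set J : ℝ := ∏ i, l i with hJdef
  have hJ : 0 < J := Finset.prod_pos fun i _ => hpos i
  have h0 : 0 < n := hn
  have h1 : 1 < n := by omega
  have hb' : n - k < n := by omega
  have ht' : n - 1 < n := by omega
  let i0 : Fin n := ⟨0, h0⟩
  let a : Fin n := ⟨1, h1⟩
  let b : Fin n := ⟨n - k, hb'⟩
  let top : Fin n := ⟨n - 1, ht'⟩
  set S : Finset (Fin n) := Finset.Ici b with hS
  set T : Finset (Fin n) := insert top (Finset.Ico a b) with hT
  have htopT : top ∉ Finset.Ico a b := by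
    simp only [Finset.mem_Ico, Fin.lt_def, Fin.le_def, a, b, top, not_and]; omega
  have hScard : S.card = k := by
    rw [hS, Fin.card_Ici]; simp only [b]; omega
  have hTcard : T.card = n - k := by
    rw [hT, Finset.card_insert_of_notMem htopT, Fin.card_Ico]
    simp only [a, b]; omega
  have prodnonneg : ∀ s : Finset (Fin n), 0 ≤ ∏ i ∈ s, l i :=
    fun s => Finset.prod_nonneg fun i _ => (hpos i).le
  have hSA : ∏ i ∈ S, l i ≤ A := by
    apply Finset.single_le_sum (fun s _ => prodnonneg s)
    simp [Finset.mem_powersetCard, hScard]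
  have hTB : ∏ i ∈ T, l i ≤ B := by
    apply Finset.single_le_sum (fun s _ => prodnonneg s)
    simp [Finset.mem_powersetCard, hTcard]
  have hApos : 0 < A := lt_of_lt_of_le (Finset.prod_pos fun i _ => hpos i) hSA
  have hBpos : 0 < B := lt_of_lt_of_le (Finset.prod_pos fun i _ => hpos i) hTB
  have hunion : Finset.Ico a b ∪ Finset.Ici b = Finset.Ici a := by
    ext i
    simp only [Finset.mem_union, Finset.mem_Ico, Finset.mem_Ici, Fin.le_def, Fin.lt_def, a, b]
    omega
  have hIciA : l i0 * ∏ i ∈ Finset.Ici a, l i = J := by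
    have he : Finset.Ici a = Finset.univ.erase i0 := by
      ext i
      simp only [Finset.mem_Ici, Fin.le_def, Finset.mem_erase, Finset.mem_univ,
        and_true, ne_eq, Fin.ext_iff]
      show 1 ≤ i.val ↔ ¬(i.val = 0)
      omega
    rw [he, hJdef, Finset.mul_prod_erase _ _ (Finset.mem_univ i0)]
  have hdisj : Disjoint (Finset.Ico a b) (Finset.Ici b) := by
    simp only [Finset.disjoint_left, Finset.mem_Ico, Finset.mem_Ici, Fin.le_def, Fin.lt_def,
      not_le]
    intro x hx
    omega
  have hprodST : (∏ i ∈ S, l i) * ∏ i ∈ T, l i = l top * (J / l i0) := by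
    rw [hT, Finset.prod_insert htopT]
    have hu := Finset.prod_union hdisj (f := l)
    rw [hunion] at hu
    have hJ' : ∏ i ∈ Finset.Ici a, l i = J / l i0 := by
      rw [eq_div_iff (hpos i0).ne']; linarith [hIciA]
    rw [hS]
    calc (∏ i ∈ Finset.Ici b, l i) * (l top * ∏ i ∈ Finset.Ico a b, l i)
        = l top * ((∏ i ∈ Finset.Ico a b, l i) * ∏ i ∈ Finset.Ici b, l i) := by ring
      _ = l top * (J / l i0) := by rw [← hu, hJ']
  rw [div_le_div_iff₀ (hpos i0) hJ]
  calc l top * J = (l top * (J / l i0)) * l i0 := by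
        rw [mul_assoc, div_mul_cancel₀ _ (hpos i0).ne']
    _ = ((∏ i ∈ S, l i) * ∏ i ∈ T, l i) * l i0 := by rw [hprodST]
    _ ≤ (A * B) * l i0 :=
        mul_le_mul_of_nonneg_right
          (mul_le_mul hSA hTB (prodnonneg T) hApos.le) (hpos i0).le

/-- For positive `λ_1 ≤ ⋯ ≤ λ_n`, `1 ≤ k ≤ n-1`, `q > 1` and `q' = q/(q-1)`,
`λ_n/λ_1 ≤ (σ_k^q / J)^{1/q} · (σ_{n-k}^{q'} / J)^{1/q'}` with `J = λ_1 ⋯ λ_n`. -/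
theorem ratio_le_holder_split (n k : ℕ) (hk : 1 ≤ k) (hkn : k + 1 ≤ n)
    (l : Fin n → ℝ) (hmono : Monotone l) (hpos : ∀ i, 0 < l i)
    (q q' : ℝ) (hq : 1 < q) (hq' : q' = q / (q - 1)) :
    l ⟨n - 1, by omega⟩ / l ⟨0, by omega⟩ ≤
      (esymmFun n k l ^ q / ∏ i, l i) ^ (1 / q) *
        (esymmFun n (n - k) l ^ q' / ∏ i, l i) ^ (1 / q') := by
  have hcore := esymm_ratio_core n k hk hkn l hpos
  simp only at hcore
  set A : ℝ := esymmFun n k l with hA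
  set B : ℝ := esymmFun n (n - k) l with hB
  set J : ℝ := ∏ i, l i with hJdef
  have hJ : 0 < J := Finset.prod_pos fun i _ => hpos i
  have prodnonneg : ∀ s : Finset (Fin n), 0 ≤ ∏ i ∈ s, l i :=
    fun s => Finset.prod_nonneg fun i _ => (hpos i).le
  have hApos : 0 < A := by
    apply Finset.sum_pos (fun s hs => Finset.prod_pos fun i _ => hpos i)
    rw [Finset.powersetCard_nonempty]
    simp only [Finset.card_univ, Fintype.card_fin]; omega
  have hBpos : 0 < B := by
    apply Finset.sum_pos (fun s hs => Finset.prod_pos fun i _ => hpos i)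
    rw [Finset.powersetCard_nonempty]
    simp only [Finset.card_univ, Fintype.card_fin]; omega
  have hq0 : (0:ℝ) < q := by linarith
  have hq'0 : (0:ℝ) < q' := by
    have h1 : (0:ℝ) < q - 1 := by linarith
    rw [hq']
    positivity
  have hsum : 1 / q + 1 / q' = 1 := by
    rw [hq']; field_simp; ring
  rw [rpow_div_aux A J q hApos hJ hq0, rpow_div_aux B J q' hBpos hJ hq'0]
  have hJsplit : J ^ (1/q) * J ^ (1/q') = J := by
    rw [← Real.rpow_add hJ, hsum, Real.rpow_one]
  calc l ⟨n - 1, by omega⟩ / l ⟨0, by omega⟩ ≤ A * B / J := hcore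
    _ = A / J ^ (1/q) * (B / J ^ (1/q')) := by
        rw [div_mul_div_comm, hJsplit]
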